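/- arXiv:1211.0803 — 2 statements merged into one kernel-verified Lean document; each statement's English description precedes it below -/
import Mathlib

section
/- (Determinant identity for generalized quantum graph walks) Let (L, λ, A) be quantum-graph parameters, k a nonzero real, and for each j ∈ V let α_j = (α_{j,l})_{l∈N(j)} ∈ ℂ^{N(j)} be a unit vector (Σ_{l∈N(j)} |α_{j,l}|² = 1). Define the coin H_j(k) = D_j(k)·((1 + e^{−iρ_j(k)})·Π_j − I_{d_j}), where Π_j = |α_j⟩⟨α_j|, D_j(k) = diag(e^{iL_{{j,m}}(k − A_{(j,m)})})_{m∈N(j)}, and e^{iρ_j(k)} = (1 + iλ_j/(k d_j))/(1 − iλ_j/(k d_j)); let Ũ(k) = S·⊕_{j∈V} H_j(k) be the corresponding A-type walk with flip-flop shift. Then for every t ∈ ℂ with t²·e^{2ikL_e} ≠ 1 for all e ∈ E, det(I_{2|E|} − t·Ũ(k)) = det(I_{|V|} − t·T(t) + t²·𝒟(t)) · ∏_{e∈E} (1 − t²·e^{2ikL_e}), where T(t) is the |V|×|V| matrix with T(t)_{i,j} = e^{iL_{{i,j}}(k + A_{(i,j)})}·(1 + e^{−iρ_j(k)})·α_{j,i}·conj(α_{i,j})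 / (1 − t²·e^{2ikL_{{i,j}}}) for (i,j) ∈ D(G) and 0 otherwise, and 𝒟(t) is the diagonal |V|×|V| matrix with 𝒟(t)_{j,j} = (1 + e^{−iρ_j(k)})·Σ_{l∈N(j)} |α_{j,l}|²·e^{2ikL_{{j,l}}}/(1 − t²·e^{2ikL_{{j,l}}}). -/
open Matrix Complex BigOperators

section QWFramework

variable {V : Type*}

instance arcDecPred (G : SimpleGraph V) [DecidableRel G.Adj] :
    DecidablePred fun p : V × V => G.Adj p.1 p.2 :=
  fun p => inferInstanceAs (Decidable (G.Adj p.1 p.2))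

instance nbrDecPred (G : SimpleGraph V) [DecidableRel G.Adj] (u : V) :
    DecidablePred (G.Adj u) :=
  fun w => inferInstanceAs (Decidable (G.Adj u w))

/-- The symmetric arc set `D(G)` of a graph: ordered pairs of adjacent vertices. -/
abbrev Arc (G : SimpleGraph V) : Type _ := {p : V × V // G.Adj p.1 p.2}

variable [Fintype V] [DecidableEq V]

/-- The shift (permutation) operator `S_σ` of a shift family `σ`, acting on `ℂ^{D(G)}`
by `S_σ |i,j⟩ = |j, σ_j(i)⟩`. -/
noncomputable def shiftOp (G : SimpleGraph V) [DecidableRel G.Adj]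
    (σ : ∀ u : V, Equiv.Perm {w : V // G.Adj u w}) :
    Matrix (Arc G) (Arc G) ℂ :=
  fun a b => if a.1.1 = b.1.2 ∧ a.1.2 = (σ b.1.2 ⟨b.1.1, b.2.symm⟩).1 then 1 else 0

/-- The flip-flop shift family: the identity permutation at every vertex. -/
def ffFam (G : SimpleGraph V) : ∀ u : V, Equiv.Perm {w : V // G.Adj u w} :=
  fun _ => Equiv.refl _

/-- The flip-flop shift operator `S`, with `S|i,j⟩ = |j,i⟩`. -/
noncomputable def ffShift (G : SimpleGraph V) [DecidableRel G.Adj] : Matrix (Arc G) (Arc G) ℂ :=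
  shiftOp G (ffFam G)

/-- The block-diagonal coin operator `C = ⊕_u H_u`, acting by
`C|i,j⟩ = Σ_{k∈N(i)} (H_i)_{k,j} |i,k⟩`. -/
noncomputable def coinOp (G : SimpleGraph V) [DecidableRel G.Adj]
    (H : ∀ u : V, Matrix {w : V // G.Adj u w} {w : V // G.Adj u w} ℂ) :
    Matrix (Arc G) (Arc G) ℂ :=
  fun a b => if h : a.1.1 = b.1.1 then H b.1.1 ⟨a.1.2, by rw [← h]; exact a.2⟩ ⟨b.1.2, b.2⟩ else 0

/-- The G-type (Gudder type) coined quantum walk `U^G_σ[H] = C·S_σ`. -/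
noncomputable def gWalk (G : SimpleGraph V) [DecidableRel G.Adj]
    (σ : ∀ u : V, Equiv.Perm {w : V // G.Adj u w})
    (H : ∀ u : V, Matrix {w : V // G.Adj u w} {w : V // G.Adj u w} ℂ) :
    Matrix (Arc G) (Arc G) ℂ :=
  coinOp G H * shiftOp G σ

/-- The A-type (Ambainis type) coined quantum walk `U^A_σ[H] = S_σ·C`. -/
noncomputable def aWalk (G : SimpleGraph V) [DecidableRel G.Adj]
    (σ : ∀ u : V, Equiv.Perm {w : V // G.Adj u w})
    (H : ∀ u : V, Matrix {w : V // G.Adj u w} {w : V // G.Adj u w} ℂ) :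
    Matrix (Arc G) (Arc G) ℂ :=
  shiftOp G σ * coinOp G H

end QWFramework

/-- The arc value of an edge potential: `A_{(i,j)} = sgn(j−i)·A_{{i,j}}`. -/
def arcPot {V : Type*} [LinearOrder V] (Ae : V → V → ℝ) (i j : V) : ℝ :=
  if i < j then Ae i j else -(Ae i j)

/-- The local coin `H_j(k)` of the quantum graph walk at vertex `j`:
`(H_j(k))_{m,l} = (2/(d_j + iλ_j/k) − δ_{l,m})·e^{iL_{{j,m}}(k − A_{(j,m)})}`. -/
noncomputable def qgCoin {V : Type*} [Fintype V] [LinearOrder V]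
    (G : SimpleGraph V) [DecidableRel G.Adj]
    (L : V → V → ℝ) (lam : V → ℝ) (Ae : V → V → ℝ) (k : ℝ) (j : V) :
    Matrix {w : V // G.Adj j w} {w : V // G.Adj j w} ℂ :=
  fun m l =>
    (2 / ((G.degree j : ℂ) + Complex.I * (lam j : ℂ) / (k : ℂ)) - if l = m then 1 else 0) *
      Complex.exp (Complex.I * (L j m.1 : ℂ) * ((k : ℂ) - (arcPot Ae j m.1 : ℂ)))

/-- The quantum graph walk `U^{(L,λ,A)}(k) = S·C(k)`: the A-type walk with flip-flop shift
and coins `H_j(k)`. -/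
noncomputable def qgWalk {V : Type*} [Fintype V] [LinearOrder V]
    (G : SimpleGraph V) [DecidableRel G.Adj]
    (L : V → V → ℝ) (lam : V → ℝ) (Ae : V → V → ℝ) (k : ℝ) :
    Matrix (Arc G) (Arc G) ℂ :=
  ffShift G * coinOp G (qgCoin G L lam Ae k)

/-- `e^{−iρ_j(k)}`, where `e^{iρ_j(k)} = (1 + iλ_j/(k d_j))/(1 − iλ_j/(k d_j))`. -/
noncomputable def expNegRho {V : Type*} [Fintype V] [DecidableEq V]
    (G : SimpleGraph V) [DecidableRel G.Adj] (lam : V → ℝ) (k : ℝ) (j : V) : ℂ :=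
  (1 - Complex.I * (lam j : ℂ) / ((k : ℂ) * (G.degree j : ℂ))) /
    (1 + Complex.I * (lam j : ℂ) / ((k : ℂ) * (G.degree j : ℂ)))

/-- The generalized quantum-graph-walk coin
`H_j(k) = D_j(k)·((1 + e^{−iρ_j(k)})·Π_j − I)`, with `Π_j = |α_j⟩⟨α_j|` and
`D_j(k) = diag(e^{iL_{{j,m}}(k − A_{(j,m)})})`. -/
noncomputable def genQgCoin {V : Type*} [Fintype V] [LinearOrder V]
    (G : SimpleGraph V) [DecidableRel G.Adj]
    (L : V → V → ℝ) (lam : V → ℝ) (Ae : V → V → ℝ) (k : ℝ)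
    (α : ∀ j : V, {w : V // G.Adj j w} → ℂ) (j : V) :
    Matrix {w : V // G.Adj j w} {w : V // G.Adj j w} ℂ :=
  fun m l =>
    Complex.exp (Complex.I * (L j m.1 : ℂ) * ((k : ℂ) - (arcPot Ae j m.1 : ℂ))) *
      ((1 + expNegRho G lam k j) * α j m * (starRingEnd ℂ) (α j l) - if m = l then 1 else 0)


section DetProof

variable {V : Type*} [Fintype V] [LinearOrder V]

/-- Arc reversal as an equivalence. -/
def arcRev (G : SimpleGraph V) : Arc G ≃ Arc G where
  toFun a := ⟨(a.1.2, a.1.1), a.2.symm⟩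
  invFun a := ⟨(a.1.2, a.1.1), a.2.symm⟩
  left_inv a := rfl
  right_inv a := rfl

variable (G : SimpleGraph V) [DecidableRel G.Adj]

@[simp] lemma arcRev_fst (a : Arc G) : (arcRev G a).1.1 = a.1.2 := rfl
@[simp] lemma arcRev_snd (a : Arc G) : (arcRev G a).1.2 = a.1.1 := rfl
@[simp] lemma arcRev_rev (a : Arc G) : arcRev G (arcRev G a) = a := rfl

variable (L : V → V → ℝ) (lam : V → ℝ) (Ae : V → V → ℝ) (k : ℝ)
  (α : ∀ j : V, {w : V // G.Adj j w} → ℂ) (t : ℂ)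

/-- The diagonal arc weight `d_a = e^{iL_a(k - A_a)}`. -/
noncomputable def ddA : Arc G → ℂ := fun a =>
  Complex.exp (Complex.I * (L a.1.1 a.1.2 : ℂ) * ((k : ℂ) - (arcPot Ae a.1.1 a.1.2 : ℂ)))

/-- The arc weight `e_a = e^{2ikL_a}`. -/
noncomputable def eeA : Arc G → ℂ := fun a =>
  Complex.exp (2 * Complex.I * (k : ℂ) * (L a.1.1 a.1.2 : ℂ))

/-- `ε_a = (1 - t²e_a)⁻¹`. -/
noncomputable def epsA : Arc G → ℂ := fun a => (1 - t ^ 2 * eeA G L k a)⁻¹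

/-- `Y f = (diagonal f) ∘ arc reversal`. -/
noncomputable def Ymat (f : Arc G → ℂ) : Matrix (Arc G) (Arc G) ℂ :=
  (Matrix.diagonal f).submatrix (arcRev G) id

/-- `B : Arc × V` with `B_{a,v} = δ_{a₁,v}(1+c_v)α_{v,a₂}`. -/
noncomputable def BmatA : Matrix (Arc G) V ℂ := fun a v =>
  if h : a.1.1 = v then (1 + expNegRho G lam k v) * α v ⟨a.1.2, h ▸ a.2⟩ else 0

/-- `B* : V × Arc` with `B*_{v,a} = δ_{a₁,v} conj α_{v,a₂}`. -/
noncomputable def BsmatA : Matrix V (Arc G) ℂ := fun v a =>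
  if h : a.1.1 = v then (starRingEnd ℂ) (α v ⟨a.1.2, h ▸ a.2⟩) else 0

lemma Ymat_apply (f : Arc G → ℂ) (a b : Arc G) :
    Ymat G f a b = if arcRev G a = b then f (arcRev G a) else 0 := by
  simp [Ymat, Matrix.diagonal_apply]

lemma Ymat_mul_apply {n : Type*} [Fintype n] (f : Arc G → ℂ) (Z : Matrix (Arc G) n ℂ)
    (a : Arc G) (b : n) : (Ymat G f * Z) a b = f (arcRev G a) * Z (arcRev G a) b := by
  rw [Matrix.mul_apply]
  rw [Finset.sum_eq_single (arcRev G a)]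
  · rw [Ymat_apply]; simp
  · intro c _ hc; rw [Ymat_apply, if_neg (Ne.symm ?_)]; · ring
    exact hc
  · simp

lemma Ymat_mul_Ymat (f g : Arc G → ℂ) :
    Ymat G f * Ymat G g = Matrix.diagonal (fun a => f (arcRev G a) * g a) := by
  ext a b
  rw [Ymat_mul_apply, Ymat_apply, Matrix.diagonal_apply]
  simp only [arcRev_rev]
  split_ifs with h <;> simp [h]

lemma diag_mul_Ymat (g f : Arc G → ℂ) :
    Matrix.diagonal g * Ymat G f = Ymat G (fun x => g (arcRev G x) * f x) := by
  ext a b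
  rw [Matrix.diagonal_mul, Ymat_apply, Ymat_apply]
  split_ifs with h
  · subst h; simp
  · ring

lemma Ymat_mul_diag (f g : Arc G → ℂ) :
    Ymat G f * Matrix.diagonal g = Ymat G (fun x => f x * g x) := by
  ext a b
  rw [Matrix.mul_diagonal, Ymat_apply, Ymat_apply]
  split_ifs with h
  · subst h; ring
  · ring

end DetProof

section DetProof2

variable {V : Type*} [Fintype V] [LinearOrder V]
variable (G : SimpleGraph V) [DecidableRel G.Adj]
variable (L : V → V → ℝ) (lam : V → ℝ) (Ae : V → V → ℝ) (k : ℝ)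
  (α : ∀ j : V, {w : V // G.Adj j w} → ℂ) (t : ℂ)

lemma arcPot_antisymm (hAs : ∀ i j, Ae i j = Ae j i) {i j : V} (hij : i ≠ j) :
    arcPot Ae j i = -arcPot Ae i j := by
  rcases lt_or_gt_of_ne hij with h | h
  · simp [arcPot, h, not_lt.mpr h.le, hAs j i]
  · simp [arcPot, h, not_lt.mpr h.le, hAs j i]

lemma eeA_rev (hLs : ∀ i j, L i j = L j i) (a : Arc G) :
    eeA G L k (arcRev G a) = eeA G L k a := by
  simp [eeA, hLs a.1.2 a.1.1]

lemma epsA_rev (hLs : ∀ i j, L i j = L j i) (a : Arc G) :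
    epsA G L k t (arcRev G a) = epsA G L k t a := by
  simp [epsA, eeA_rev G L k hLs]

lemma ddA_mul_rev (hLs : ∀ i j, L i j = L j i) (hAs : ∀ i j, Ae i j = Ae j i) (a : Arc G) :
    ddA G L Ae k a * ddA G L Ae k (arcRev G a) = eeA G L k a := by
  rw [ddA, ddA, eeA, ← Complex.exp_add]
  congr 1
  have h1 : L a.1.2 a.1.1 = L a.1.1 a.1.2 := hLs _ _
  have h2 : arcPot Ae a.1.2 a.1.1 = -arcPot Ae a.1.1 a.1.2 := arcPot_antisymm Ae hAs a.2.ne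
  rw [arcRev_fst, arcRev_snd, h1, h2]
  push_cast
  ring

lemma one_sub_ne (ht : ∀ i j : V, G.Adj i j →
      t ^ 2 * Complex.exp (2 * Complex.I * (k : ℂ) * (L i j : ℂ)) ≠ 1) (a : Arc G) :
    1 - t ^ 2 * eeA G L k a ≠ 0 :=
  sub_ne_zero.mpr (Ne.symm (ht a.1.1 a.1.2 a.2))

/-- `M = 1 + t·S·D`. -/
noncomputable def MmA : Matrix (Arc G) (Arc G) ℂ := 1 + t • Ymat G (ddA G L Ae k)

/-- `G = E⁻¹·(1 − t·S·D)`, the inverse of `M`. -/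
noncomputable def GmA : Matrix (Arc G) (Arc G) ℂ :=
  Matrix.diagonal (epsA G L k t) * (1 - t • Ymat G (ddA G L Ae k))

lemma GmA_eq : GmA G L Ae k t =
    Matrix.diagonal (epsA G L k t)
      - t • Ymat G (fun x => epsA G L k t (arcRev G x) * ddA G L Ae k x) := by
  rw [GmA, Matrix.mul_sub, Matrix.mul_one, Matrix.mul_smul, diag_mul_Ymat]

lemma MmA_mul_GmA (hLs : ∀ i j, L i j = L j i) (hAs : ∀ i j, Ae i j = Ae j i)
    (ht : ∀ i j : V, G.Adj i j →
      t ^ 2 * Complex.exp (2 * Complex.I * (k : ℂ) * (L i j : ℂ)) ≠ 1) :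
    MmA G L Ae k t * GmA G L Ae k t = 1 := by
  rw [GmA_eq, MmA, add_mul, one_mul, Matrix.smul_mul, Matrix.mul_sub, Matrix.mul_smul,
    Ymat_mul_diag, Ymat_mul_Ymat, smul_sub]
  have hY : Ymat G (fun x => ddA G L Ae k x * epsA G L k t x)
      = Ymat G (fun x => epsA G L k t (arcRev G x) * ddA G L Ae k x) := by
    rw [show (fun x => ddA G L Ae k x * epsA G L k t x)
        = (fun x => epsA G L k t (arcRev G x) * ddA G L Ae k x) from
      funext fun x => by rw [epsA_rev G L k t hLs]; ring]
  rw [hY, sub_add_sub_cancel, smul_smul, ← Matrix.diagonal_smul,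
    Matrix.diagonal_sub, ← Matrix.diagonal_one, Matrix.diagonal_eq_diagonal_iff]
  intro a
  simp only [Pi.smul_apply, Pi.sub_apply, smul_eq_mul, Pi.one_apply]
  have he : ddA G L Ae k (arcRev G a) * (epsA G L k t (arcRev G a) * ddA G L Ae k a)
      = epsA G L k t a * eeA G L k a := by
    rw [epsA_rev G L k t hLs, ← ddA_mul_rev G L Ae k hLs hAs]; ring
  rw [he, epsA]
  field_simp [one_sub_ne G L k t ht a]

end DetProof2

section DetProof3

variable {V : Type*} [Fintype V] [LinearOrder V]
variable (G : SimpleGraph V) [DecidableRel G.Adj]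
variable (L : V → V → ℝ) (lam : V → ℝ) (Ae : V → V → ℝ) (k : ℝ)
  (α : ∀ j : V, {w : V // G.Adj j w} → ℂ) (t : ℂ)

lemma dite_sum {γ : Type*} [Fintype γ] (P : γ → Prop) [DecidablePred P]
    (f : {x // P x} → ℂ) :
    ∑ x : γ, (if h : P x then f ⟨x, h⟩ else 0) = ∑ x : {x // P x}, f x := by
  rw [← Equiv.sum_comp (Equiv.sumCompl P) (fun x => if h : P x then f ⟨x, h⟩ else 0),
    Fintype.sum_sum_type]
  have h1 : ∀ x : {a // P a}, (if h : P ↑x then f ⟨↑x, h⟩ else 0) = f x := fun x => by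
    rw [dif_pos x.2]
  have h2 : ∀ x : {a // ¬P a}, (if h : P ↑x then f ⟨↑x, h⟩ else 0) = 0 := fun x => by
    rw [dif_neg x.2]
  simp only [Equiv.sumCompl_apply_inl, Equiv.sumCompl_apply_inr, h1, h2,
    Finset.sum_const_zero, add_zero]
  simp [dif_pos, Subtype.property]
  exact Finset.sum_eq_zero fun x _ => dif_neg x.2

lemma arc_sum (f : Arc G → ℂ) :
    ∑ a : Arc G, f a
      = ∑ x : V, ∑ y : V, (if h : G.Adj x y then f ⟨(x, y), h⟩ else 0) := by
  rw [← dite_sum (fun p : V × V => G.Adj p.1 p.2) f, Fintype.sum_prod_type]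

lemma ffShift_apply (a b : Arc G) :
    ffShift G a b = if arcRev G a = b then 1 else 0 := by
  have h : (a.1.1 = b.1.2 ∧ a.1.2 = b.1.1) ↔ arcRev G a = b := by
    constructor
    · rintro ⟨h1, h2⟩
      exact Subtype.ext (Prod.ext h2 h1)
    · rintro rfl
      exact ⟨rfl, rfl⟩
  simp only [ffShift, shiftOp, ffFam, Equiv.refl_apply, h]

lemma Q_apply (p b : Arc G) :
    (BmatA G lam k α * BsmatA G α) p b
      = (1 + expNegRho G lam k p.1.1) * α p.1.1 ⟨p.1.2, p.2⟩ *
        (if h : b.1.1 = p.1.1 then (starRingEnd ℂ) (α p.1.1 ⟨b.1.2, h ▸ b.2⟩) else 0) := by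
  rw [Matrix.mul_apply, Finset.sum_eq_single p.1.1]
  · rw [BmatA, dif_pos rfl, BsmatA]
  · intro v _ hv
    rw [BmatA, dif_neg (fun h => hv h.symm), zero_mul]
  · simp

lemma walk_decomp :
    ffShift G * coinOp G (genQgCoin G L lam Ae k α)
      = Ymat G (ddA G L Ae k) * (BmatA G lam k α * BsmatA G α) - Ymat G (ddA G L Ae k) := by
  ext a b
  have hL : (ffShift G * coinOp G (genQgCoin G L lam Ae k α)) a b
      = coinOp G (genQgCoin G L lam Ae k α) (arcRev G a) b := by
    rw [Matrix.mul_apply, Finset.sum_eq_single (arcRev G a)]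
    · rw [ffShift_apply, if_pos rfl, one_mul]
    · intro c _ hc
      rw [ffShift_apply, if_neg (fun h => hc h.symm), zero_mul]
    · simp
  rw [hL, Matrix.sub_apply, Ymat_mul_apply, Ymat_apply, Q_apply]
  obtain ⟨⟨a1, a2⟩, ha⟩ := a
  obtain ⟨⟨b1, b2⟩, hb⟩ := b
  simp only [arcRev, Equiv.coe_fn_mk]
  by_cases h : a2 = b1
  · subst h
    rw [coinOp, dif_pos rfl, genQgCoin]
    simp only [BsmatA, dif_pos rfl, ddA, Subtype.mk.injEq, Prod.mk.injEq, true_and, dite_true]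
    split_ifs with h12 <;> simp <;> ring
  · rw [coinOp, dif_neg h]
    erw [dif_neg (fun hh => h (Eq.symm hh))]
    have : (⟨(a2, a1), ha.symm⟩ : Arc G) ≠ ⟨(b1, b2), hb⟩ := by
      intro hh
      exact h (congrArg (fun q : Arc G => q.1.1) hh)
    erw [if_neg this]
    ring

end DetProof3

section DetProof4

variable {V : Type*} [Fintype V] [LinearOrder V]
variable (G : SimpleGraph V) [DecidableRel G.Adj]

/-- Oriented edges: adjacent pairs with increasing endpoints. -/
abbrev EdgeT := {p : V × V // G.Adj p.1 p.2 ∧ p.1 < p.2}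

/-- Arcs are in bijection with (edge, direction) pairs. -/
def edgeArcEquiv : Bool × EdgeT G ≃ Arc G where
  toFun x := match x with
    | (false, e) => ⟨e.1, e.2.1⟩
    | (true, e) => ⟨(e.1.2, e.1.1), e.2.1.symm⟩
  invFun a :=
    if h : a.1.1 < a.1.2 then (false, ⟨a.1, a.2, h⟩)
    else (true, ⟨(a.1.2, a.1.1), a.2.symm, (a.2.ne.lt_or_gt.resolve_left h)⟩)
  left_inv x := by
    obtain ⟨b, e⟩ := x
    cases b
    · dsimp only
      rw [dif_pos e.2.2]
    · dsimp only
      rw [dif_neg (not_lt.mpr e.2.2.le)]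
  right_inv a := by
    dsimp only
    by_cases h : a.1.1 < a.1.2
    · rw [dif_pos h]
    · rw [dif_neg h]

lemma arcRev_edgeArcEquiv (b : Bool) (e : EdgeT G) :
    arcRev G (edgeArcEquiv G (b, e)) = edgeArcEquiv G (!b, e) := by
  cases b <;> rfl

variable (L : V → V → ℝ) (Ae : V → V → ℝ) (k : ℝ) (t : ℂ)

lemma det_MmA (hLs : ∀ i j, L i j = L j i) (hAs : ∀ i j, Ae i j = Ae j i) :
    (MmA G L Ae k t).det
      = ∏ e ∈ Finset.univ.filter (fun e : V × V => G.Adj e.1 e.2 ∧ e.1 < e.2),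
          (1 - t ^ 2 * Complex.exp (2 * Complex.I * (k : ℂ) * (L e.1 e.2 : ℂ))) := by
  rw [← Matrix.det_submatrix_equiv_self (edgeArcEquiv G) (MmA G L Ae k t)]
  have hblock : (MmA G L Ae k t).submatrix (edgeArcEquiv G) (edgeArcEquiv G)
      = Matrix.blockDiagonal (fun e : EdgeT G => Matrix.of (fun b b' : Bool =>
          (if b = b' then 1 else 0)
            + t * (if (!b) = b' then ddA G L Ae k (edgeArcEquiv G (!b, e)) else 0))) := by
    ext ⟨b, e⟩ ⟨b', e'⟩
    simp only [Matrix.submatrix_apply, Matrix.blockDiagonal_apply, Matrix.of_apply]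
    rw [MmA, Matrix.add_apply,
      Matrix.smul_apply, Matrix.one_apply, Ymat_apply, arcRev_edgeArcEquiv, smul_eq_mul]
    simp only [Equiv.apply_eq_iff_eq, Prod.mk.injEq]
    by_cases he : e = e' <;> simp [he]
  rw [hblock, Matrix.det_blockDiagonal]
  have hdet : ∀ e : EdgeT G,
      (Matrix.det (Matrix.of fun b b' : Bool =>
          (if b = b' then 1 else 0)
            + t * (if (!b) = b' then ddA G L Ae k (edgeArcEquiv G (!b, e)) else 0)))
        = 1 - t ^ 2 * Complex.exp (2 * Complex.I * (k : ℂ) * (L e.1.1 e.1.2 : ℂ)) := by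
    intro e
    rw [← Matrix.det_submatrix_equiv_self finTwoEquiv, Matrix.det_fin_two]
    have hmul := ddA_mul_rev G L Ae k hLs hAs (edgeArcEquiv G (false, e))
    rw [arcRev_edgeArcEquiv] at hmul
    have h2 : ddA G L Ae k (edgeArcEquiv G (false, e)) *
        ddA G L Ae k (edgeArcEquiv G (true, e))
          = Complex.exp (2 * Complex.I * (k : ℂ) * (L e.1.1 e.1.2 : ℂ)) := hmul
    have h0 : finTwoEquiv (0 : Fin 2) = false := rfl
    have h1 : finTwoEquiv (1 : Fin 2) = true := rfl
    simp only [Matrix.submatrix_apply, Matrix.of_apply, h0, h1]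
    norm_num
    linear_combination (t ^ 2) * h2
  rw [Finset.prod_congr rfl (fun e _ => hdet e)]
  exact (Finset.prod_subtype _ (fun x => by simp) (fun p : V × V =>
    1 - t ^ 2 * Complex.exp (2 * Complex.I * (k : ℂ) * (L p.1 p.2 : ℂ)))).symm

end DetProof4

section DetProof5

variable {V : Type*} [Fintype V] [LinearOrder V]
variable (G : SimpleGraph V) [DecidableRel G.Adj]
variable (L : V → V → ℝ) (lam : V → ℝ) (Ae : V → V → ℝ) (k : ℝ)
  (α : ∀ j : V, {w : V // G.Adj j w} → ℂ) (t : ℂ)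

lemma T_entry (hLs : ∀ i j, L i j = L j i) (hAs : ∀ i j, Ae i j = Ae j i) (i j : V) :
    (BsmatA G α * (Ymat G (fun x => epsA G L k t (arcRev G x) * ddA G L Ae k x) *
        BmatA G lam k α)) i j
      = if h : G.Adj i j then
          Complex.exp (Complex.I * (L i j : ℂ) * ((k : ℂ) + (arcPot Ae i j : ℂ))) *
              (1 + expNegRho G lam k j) * α j ⟨i, h.symm⟩ * (starRingEnd ℂ) (α i ⟨j, h⟩) /
            (1 - t ^ 2 * Complex.exp (2 * Complex.I * (k : ℂ) * (L i j : ℂ)))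
        else 0 := by
  rw [Matrix.mul_apply]
  simp only [Ymat_mul_apply, arcRev_rev]
  rw [arc_sum]
  have hterm : ∀ x y : V,
      (if hxy : G.Adj x y then
          BsmatA G α i ⟨(x, y), hxy⟩ *
            (epsA G L k t ⟨(x, y), hxy⟩ *
                ddA G L Ae k (arcRev G ⟨(x, y), hxy⟩) *
              BmatA G lam k α (arcRev G ⟨(x, y), hxy⟩) j)
        else 0)
      = if x = i then (if y = j then
          (if h : G.Adj i j then
            Complex.exp (Complex.I * (L i j : ℂ) * ((k : ℂ) + (arcPot Ae i j : ℂ))) *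
                (1 + expNegRho G lam k j) * α j ⟨i, h.symm⟩ * (starRingEnd ℂ) (α i ⟨j, h⟩) /
              (1 - t ^ 2 * Complex.exp (2 * Complex.I * (k : ℂ) * (L i j : ℂ)))
          else 0) else 0) else 0 := by
    intro x y
    by_cases hx : x = i
    · subst hx
      rw [if_pos rfl]
      by_cases hy : y = j
      · subst hy
        rw [if_pos rfl]
        by_cases h : G.Adj x y
        · rw [dif_pos h, dif_pos h]
          have harc : arcRev G ⟨(x, y), h⟩ = ⟨(y, x), h.symm⟩ := rfl
          rw [harc, BsmatA, BmatA]
          dsimp only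
          rw [dif_pos rfl, dif_pos rfl]
          have hdd : ddA G L Ae k (⟨(y, x), h.symm⟩ : Arc G)
              = Complex.exp (Complex.I * (L x y : ℂ) * ((k : ℂ) + (arcPot Ae x y : ℂ))) := by
            rw [ddA]
            dsimp only
            congr 1
            rw [hLs y x, arcPot_antisymm Ae hAs h.ne]
            push_cast
            ring
          rw [hdd]
          have heps : epsA G L k t ⟨(x, y), h⟩
              = (1 - t ^ 2 * Complex.exp (2 * Complex.I * (k : ℂ) * (L x y : ℂ)))⁻¹ := rfl
          rw [heps, div_eq_mul_inv]
          ring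
        · rw [dif_neg h, dif_neg h]
      · rw [if_neg hy]
        by_cases h : G.Adj x y
        · rw [dif_pos h, BmatA]
          have hne : (arcRev G ⟨(x, y), h⟩).1.1 ≠ j := hy
          rw [dif_neg hne, mul_zero, mul_zero]
        · rw [dif_neg h]
    · rw [if_neg hx]
      by_cases h : G.Adj x y
      · rw [dif_pos h, BsmatA]
        have hne : (⟨(x, y), h⟩ : Arc G).1.1 ≠ i := hx
        rw [dif_neg hne, zero_mul]
      · rw [dif_neg h]
  simp only [hterm]
  rw [Finset.sum_comm]
  simp only [Finset.sum_ite_eq', Finset.mem_univ, if_true]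

lemma D_entry (hLs : ∀ i j, L i j = L j i) (hAs : ∀ i j, Ae i j = Ae j i) (i j : V) :
    (BsmatA G α * (Matrix.diagonal (fun a =>
        epsA G L k t a * (ddA G L Ae k (arcRev G a) * ddA G L Ae k a)) *
        BmatA G lam k α)) i j
      = if i = j then
          (1 + expNegRho G lam k j) *
            ∑ l : {w : V // G.Adj j w},
              (Complex.normSq (α j l) : ℂ) *
                Complex.exp (2 * Complex.I * (k : ℂ) * (L j l.1 : ℂ)) /
                (1 - t ^ 2 * Complex.exp (2 * Complex.I * (k : ℂ) * (L j l.1 : ℂ)))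
        else 0 := by
  rw [Matrix.mul_apply]
  simp only [Matrix.diagonal_mul]
  rw [arc_sum]
  by_cases hij : i = j
  · subst hij
    rw [if_pos rfl]
    have hterm : ∀ x y : V,
        (if hxy : G.Adj x y then
            BsmatA G α i ⟨(x, y), hxy⟩ *
              (epsA G L k t ⟨(x, y), hxy⟩ *
                  (ddA G L Ae k (arcRev G ⟨(x, y), hxy⟩) * ddA G L Ae k ⟨(x, y), hxy⟩) *
                BmatA G lam k α ⟨(x, y), hxy⟩ i)
          else 0)
        = if x = i then
            (if hxy : G.Adj i y then
              (1 + expNegRho G lam k i) *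
                ((Complex.normSq (α i ⟨y, hxy⟩) : ℂ) *
                  Complex.exp (2 * Complex.I * (k : ℂ) * (L i y : ℂ)) /
                  (1 - t ^ 2 * Complex.exp (2 * Complex.I * (k : ℂ) * (L i y : ℂ))))
            else 0) else 0 := by
      intro x y
      by_cases hx : x = i
      · subst hx
        rw [if_pos rfl]
        by_cases h : G.Adj x y
        · rw [dif_pos h, dif_pos h, BsmatA, BmatA]
          dsimp only
          rw [dif_pos rfl, dif_pos rfl]
          have hdd : ddA G L Ae k (arcRev G ⟨(x, y), h⟩) * ddA G L Ae k ⟨(x, y), h⟩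
              = Complex.exp (2 * Complex.I * (k : ℂ) * (L x y : ℂ)) := by
            rw [mul_comm]
            exact ddA_mul_rev G L Ae k hLs hAs ⟨(x, y), h⟩
          rw [hdd]
          have heps : epsA G L k t ⟨(x, y), h⟩
              = (1 - t ^ 2 * Complex.exp (2 * Complex.I * (k : ℂ) * (L x y : ℂ)))⁻¹ := rfl
          rw [heps]
          have hns : (Complex.normSq (α x ⟨y, h⟩) : ℂ)
              = α x ⟨y, h⟩ * (starRingEnd ℂ) (α x ⟨y, h⟩) := (Complex.mul_conj _).symm
          rw [hns, div_eq_mul_inv]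
          ring
        · rw [dif_neg h, dif_neg h]
      · rw [if_neg hx]
        by_cases h : G.Adj x y
        · rw [dif_pos h, BsmatA]
          have hne : (⟨(x, y), h⟩ : Arc G).1.1 ≠ i := hx
          rw [dif_neg hne, zero_mul]
        · rw [dif_neg h]
    simp only [hterm]
    rw [Finset.sum_comm]
    simp only [Finset.sum_ite_eq', Finset.mem_univ, if_true]
    rw [← dite_sum (G.Adj i) (fun l => (Complex.normSq (α i l) : ℂ) *
        Complex.exp (2 * Complex.I * (k : ℂ) * (L i l.1 : ℂ)) /
        (1 - t ^ 2 * Complex.exp (2 * Complex.I * (k : ℂ) * (L i l.1 : ℂ)))),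
      Finset.mul_sum]
    refine Finset.sum_congr rfl (fun y _ => ?_)
    by_cases h : G.Adj i y
    · rw [dif_pos h, dif_pos h]
    · rw [dif_neg h, dif_neg h, mul_zero]
  · rw [if_neg hij]
    have hterm : ∀ x y : V,
        (if hxy : G.Adj x y then
            BsmatA G α i ⟨(x, y), hxy⟩ *
              (epsA G L k t ⟨(x, y), hxy⟩ *
                  (ddA G L Ae k (arcRev G ⟨(x, y), hxy⟩) * ddA G L Ae k ⟨(x, y), hxy⟩) *
                BmatA G lam k α ⟨(x, y), hxy⟩ j)
          else 0) = 0 := by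
      intro x y
      by_cases h : G.Adj x y
      · rw [dif_pos h]
        by_cases hx : x = i
        · subst hx
          rw [BmatA]
          have hne : (⟨(x, y), h⟩ : Arc G).1.1 ≠ j := hij
          rw [dif_neg hne, mul_zero, mul_zero]
        · rw [BsmatA]
          have hne : (⟨(x, y), h⟩ : Arc G).1.1 ≠ i := hx
          rw [dif_neg hne, zero_mul]
      · rw [dif_neg h]
    simp only [hterm, Finset.sum_const_zero]

end DetProof5

section DetProof6

variable {V : Type*} [Fintype V] [LinearOrder V]
variable (G : SimpleGraph V) [DecidableRel G.Adj]
variable (L : V → V → ℝ) (lam : V → ℝ) (Ae : V → V → ℝ) (k : ℝ)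
  (α : ∀ j : V, {w : V // G.Adj j w} → ℂ) (t : ℂ)

lemma GmA_mul_Ymat (hLs : ∀ i j, L i j = L j i) :
    GmA G L Ae k t * Ymat G (ddA G L Ae k)
      = Ymat G (fun x => epsA G L k t (arcRev G x) * ddA G L Ae k x)
        - t • Matrix.diagonal (fun a =>
            epsA G L k t a * (ddA G L Ae k (arcRev G a) * ddA G L Ae k a)) := by
  rw [GmA_eq, Matrix.sub_mul, Matrix.smul_mul, diag_mul_Ymat, Ymat_mul_Ymat]
  congr 1
  congr 1
  rw [Matrix.diagonal_eq_diagonal_iff]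
  intro a
  rw [arcRev_rev, mul_assoc]

lemma N_eq (hLs : ∀ i j, L i j = L j i) (hAs : ∀ i j, Ae i j = Ae j i) :
    BsmatA G α * (GmA G L Ae k t * (Ymat G (ddA G L Ae k) * BmatA G lam k α))
      = Matrix.of (fun i j : V =>
          if h : G.Adj i j then
            Complex.exp (Complex.I * (L i j : ℂ) * ((k : ℂ) + (arcPot Ae i j : ℂ))) *
                (1 + expNegRho G lam k j) * α j ⟨i, h.symm⟩ *
                (starRingEnd ℂ) (α i ⟨j, h⟩) /
              (1 - t ^ 2 * Complex.exp (2 * Complex.I * (k : ℂ) * (L i j : ℂ)))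
          else 0)
        - t • Matrix.of (fun i j : V =>
          if i = j then
            (1 + expNegRho G lam k j) *
              ∑ l : {w : V // G.Adj j w},
                (Complex.normSq (α j l) : ℂ) *
                  Complex.exp (2 * Complex.I * (k : ℂ) * (L j l.1 : ℂ)) /
                  (1 - t ^ 2 * Complex.exp (2 * Complex.I * (k : ℂ) * (L j l.1 : ℂ)))
          else 0) := by
  rw [← Matrix.mul_assoc (GmA G L Ae k t), GmA_mul_Ymat G L Ae k t hLs, Matrix.sub_mul,
    Matrix.smul_mul, Matrix.mul_sub, Matrix.mul_smul]
  congr 1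
  · ext i j
    rw [T_entry G L lam Ae k α t hLs hAs i j]
    rfl
  · congr 1
    ext i j
    rw [D_entry G L lam Ae k α t hLs hAs i j]
    rfl

end DetProof6

/-- determinant identity for generalized quantum graph walks:
`det(I_{2|E|} − t·Ũ(k)) = det(I_{|V|} − t·T(t) + t²·𝒟(t)) · ∏_{e∈E}(1 − t²·e^{2ikL_e})`. -/
theorem genQgWalk_det_identity {V : Type*} [Fintype V] [LinearOrder V]
    (G : SimpleGraph V) [DecidableRel G.Adj] (hG : G.Connected)
    (L : V → V → ℝ) (hLs : ∀ i j, L i j = L j i) (hLpos : ∀ i j, G.Adj i j → 0 < L i j)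
    (lam : V → ℝ) (hlam : ∀ i, 0 ≤ lam i)
    (Ae : V → V → ℝ) (hAs : ∀ i j, Ae i j = Ae j i)
    (k : ℝ) (hk : k ≠ 0)
    (α : ∀ j : V, {w : V // G.Adj j w} → ℂ)
    (hα : ∀ j : V, ∑ l : {w : V // G.Adj j w}, Complex.normSq (α j l) = 1)
    (t : ℂ)
    (ht : ∀ i j : V, G.Adj i j →
      t ^ 2 * Complex.exp (2 * Complex.I * (k : ℂ) * (L i j : ℂ)) ≠ 1) :
    Matrix.det (1 - t • (ffShift G * coinOp G (genQgCoin G L lam Ae k α))) =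
      Matrix.det
        ((1 : Matrix V V ℂ) -
          t • Matrix.of (fun i j : V =>
            if h : G.Adj i j then
              Complex.exp (Complex.I * (L i j : ℂ) * ((k : ℂ) + (arcPot Ae i j : ℂ))) *
                  (1 + expNegRho G lam k j) * α j ⟨i, h.symm⟩ *
                  (starRingEnd ℂ) (α i ⟨j, h⟩) /
                (1 - t ^ 2 * Complex.exp (2 * Complex.I * (k : ℂ) * (L i j : ℂ)))
            else 0) +
          t ^ 2 • Matrix.of (fun i j : V =>
            if i = j then
              (1 + expNegRho G lam k j) *
                ∑ l : {w : V // G.Adj j w},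
                  (Complex.normSq (α j l) : ℂ) *
                    Complex.exp (2 * Complex.I * (k : ℂ) * (L j l.1 : ℂ)) /
                    (1 - t ^ 2 * Complex.exp (2 * Complex.I * (k : ℂ) * (L j l.1 : ℂ)))
            else 0)) *
        ∏ e ∈ Finset.univ.filter (fun e : V × V => G.Adj e.1 e.2 ∧ e.1 < e.2),
          (1 - t ^ 2 * Complex.exp (2 * Complex.I * (k : ℂ) * (L e.1 e.2 : ℂ))) := by
  rw [walk_decomp G L lam Ae k α]
  have h1 : (1 : Matrix (Arc G) (Arc G) ℂ)
        - t • (Ymat G (ddA G L Ae k) * (BmatA G lam k α * BsmatA G α) - Ymat G (ddA G L Ae k))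
      = MmA G L Ae k t *
        (1 - t • (GmA G L Ae k t *
          (Ymat G (ddA G L Ae k) * (BmatA G lam k α * BsmatA G α)))) := by
    rw [Matrix.mul_sub, Matrix.mul_one, Matrix.mul_smul,
      ← Matrix.mul_assoc (MmA G L Ae k t) (GmA G L Ae k t),
      MmA_mul_GmA G L Ae k t hLs hAs ht, Matrix.one_mul, MmA, smul_sub]
    abel
  rw [h1, Matrix.det_mul, det_MmA G L Ae k t hLs hAs]
  have h2 : GmA G L Ae k t * (Ymat G (ddA G L Ae k) * (BmatA G lam k α * BsmatA G α))
      = (GmA G L Ae k t * (Ymat G (ddA G L Ae k) * BmatA G lam k α)) * BsmatA G α := by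
    simp only [Matrix.mul_assoc]
  rw [h2, ← Matrix.smul_mul, Matrix.det_one_sub_mul_comm, Matrix.mul_smul,
    N_eq G L lam Ae k α t hLs hAs]
  rw [mul_comm]
  congr 2
  rw [smul_sub, smul_smul, ← pow_two]
  abel
end

section
/- (Secular equation for the quantum graph walk) Let (L, λ, A) be quantum-graph parameters and k a nonzero real, and suppose e^{2ikL_e} ≠ 1 for every edge e ∈ E. Then there exists a nonzero a ∈ ℂ^{D(G)} with U^{(L,λ,A)}(k)·a = a if and only if det(I_{|V|} − T + 𝒟) = 0, where T is the |V|×|V| matrix with T_{i,j} = e^{iL_{{i,j}}(k + A_{(i,j)})}·(1 + e^{−iρ_j(k)}) / (√(d_i d_j)·(1 − e^{2ikL_{{i,j}}})) for (i,j) ∈ D(G) and 0 otherwise, 𝒟 is the diagonal |V|×|V| matrix with 𝒟_{j,j} = (1 + e^{−iρ_j(k)})·Σ_{l∈N(j)} e^{2ikL_{{j,l}}}/(d_j·(1 − e^{2ikL_{{j,l}}})), and e^{iρ_j(k)} = (1 + iλ_j/(k d_j))/(1 − iλ_j/(k d_j)). -/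
open Matrix Complex BigOperators

section Aux
variable {V : Type*} [Fintype V] [DecidableEq V] {G : SimpleGraph V} [DecidableRel G.Adj]

lemma ffShift_mulVec (w : Arc G → ℂ) (x : Arc G) :
    (ffShift G).mulVec w x = w ⟨(x.1.2, x.1.1), x.2.symm⟩ := by
  have h : ∀ z : Arc G, (x.1.1 = z.1.2 ∧ x.1.2 = z.1.1) ↔ z = ⟨(x.1.2, x.1.1), x.2.symm⟩ := by
    rintro ⟨⟨a, b⟩, hz⟩
    constructor
    · rintro ⟨h1, h2⟩; apply Subtype.ext; simp_all
    · intro h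
      have : (a, b) = (x.1.2, x.1.1) := congrArg Subtype.val h
      rw [Prod.ext_iff] at this
      exact ⟨this.2.symm, this.1.symm⟩
  unfold ffShift shiftOp ffFam Matrix.mulVec dotProduct
  simp only [Equiv.refl_apply, h]
  simp

/-- Reindexing equivalence between sigma-of-neighborhoods and arcs. -/
def arcEquiv (G : SimpleGraph V) [DecidableRel G.Adj] :
    (Σ j : V, {w : V // G.Adj j w}) ≃ Arc G where
  toFun s := ⟨(s.1, s.2.1), s.2.2⟩
  invFun a := ⟨a.1.1, a.1.2, a.2⟩
  left_inv := by rintro ⟨j, l, h⟩; rfl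
  right_inv := by rintro ⟨⟨i, j⟩, h⟩; rfl

lemma arc_sum_s18 (f : Arc G → ℂ) :
    ∑ x : Arc G, f x = ∑ j : V, ∑ l : {w : V // G.Adj j w}, f ⟨(j, l.1), l.2⟩ := by
  rw [← Equiv.sum_comp (arcEquiv G) f, ← Finset.univ_sigma_univ, Finset.sum_sigma]
  rfl

lemma coinOp_mulVec (H : ∀ u : V, Matrix {w : V // G.Adj u w} {w : V // G.Adj u w} ℂ)
    (a : Arc G → ℂ) (z : Arc G) :
    (coinOp G H).mulVec a z
      = ∑ l : {w : V // G.Adj z.1.1 w}, H z.1.1 ⟨z.1.2, z.2⟩ l * a ⟨(z.1.1, l.1), l.2⟩ := by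
  unfold coinOp Matrix.mulVec dotProduct
  rw [arc_sum_s18 (fun y => _)]
  rw [Finset.sum_eq_single z.1.1]
  · simp
  · intro j _ hj
    apply Finset.sum_eq_zero
    intro l _
    simp [Ne.symm hj]
  · intro h; exact absurd (Finset.mem_univ _) h

end Aux

section Aux2
variable {V : Type*} [Fintype V] [LinearOrder V] {G : SimpleGraph V} [DecidableRel G.Adj]

lemma arcPot_anti (Ae : V → V → ℝ) (hAs : ∀ i j, Ae i j = Ae j i) {i j : V} (hij : i ≠ j) :
    arcPot Ae j i = - arcPot Ae i j := by
  unfold arcPot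
  rcases lt_trichotomy i j with h | h | h
  · rw [if_pos h, if_neg (not_lt.2 h.le), hAs j i]
  · exact absurd h hij
  · rw [if_pos h, if_neg (not_lt.2 h.le), hAs j i, neg_neg]

lemma qgWalk_apply (L : V → V → ℝ) (lam : V → ℝ) (Ae : V → V → ℝ) (k : ℝ)
    (a : Arc G → ℂ) (x : Arc G) :
    (qgWalk G L lam Ae k).mulVec a x
      = ∑ l : {w : V // G.Adj x.1.2 w},
          qgCoin G L lam Ae k x.1.2 ⟨x.1.1, x.2.symm⟩ l * a ⟨(x.1.2, l.1), l.2⟩ := by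
  unfold qgWalk
  rw [← Matrix.mulVec_mulVec, ffShift_mulVec, coinOp_mulVec]

end Aux2

section Aux3
variable {V : Type*} [Fintype V] [LinearOrder V] {G : SimpleGraph V} [DecidableRel G.Adj]

lemma coin_sum_expand (c P : ℂ) {j : V} (m : {w : V // G.Adj j w})
    (g : {w : V // G.Adj j w} → ℂ) :
    ∑ l, (c - if l = m then 1 else 0) * P * g l = P * (c * ∑ l, g l - g m) := by
  have h : ∀ l : {w : V // G.Adj j w},
      (c - if l = m then 1 else 0) * P * g l
        = c * (P * g l) - (if l = m then P * g m else 0) := by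
    intro l; by_cases hl : l = m
    · simp [hl]; ring
    · simp [hl]; ring
  rw [Finset.sum_congr rfl fun l _ => h l, Finset.sum_sub_distrib, ← Finset.mul_sum,
    Finset.sum_ite_eq' Finset.univ m, if_pos (Finset.mem_univ m), ← Finset.mul_sum]
  ring

lemma walk_arc_apply (L : V → V → ℝ) (hLs : ∀ i j, L i j = L j i)
    (lam : V → ℝ) (Ae : V → V → ℝ) (hAs : ∀ i j, Ae i j = Ae j i) (k : ℝ)
    (a : Arc G → ℂ)
    {i j : V} (h : G.Adj i j) :
    (qgWalk G L lam Ae k).mulVec a ⟨(i, j), h⟩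
      = Complex.exp (Complex.I * (L i j : ℂ) * ((k : ℂ) + (arcPot Ae i j : ℂ))) *
          ((2 / ((G.degree j : ℂ) + Complex.I * (lam j : ℂ) / (k : ℂ)))
              * (∑ l : {w : V // G.Adj j w}, a ⟨(j, l.1), l.2⟩)
            - a ⟨(j, i), h.symm⟩) := by
  rw [qgWalk_apply]
  unfold qgCoin
  rw [coin_sum_expand (m := ⟨i, h.symm⟩)]
  congr 2
  rw [hLs j i, arcPot_anti Ae hAs (G.ne_of_adj h).symm]
  push_cast
  ring

end Aux3

section Aux4
variable {V : Type*} [Fintype V] [DecidableEq V] (G : SimpleGraph V) [DecidableRel G.Adj]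

lemma imag_denom_ne (d : ℕ) (hd : d ≠ 0) (l k : ℝ) :
    ((d : ℂ) + Complex.I * (l : ℂ) / (k : ℂ)) ≠ 0 := by
  have h1 : Complex.I * (l : ℂ) / (k : ℂ) = ((l / k : ℝ) : ℂ) * Complex.I := by push_cast; ring
  rw [h1]
  intro H
  have := congrArg Complex.re H
  simp [Complex.add_re] at this
  exact hd (by exact_mod_cast this)

lemma imag_denom_ne' (l x : ℝ) : (1 + Complex.I * (l : ℂ) / (x : ℂ)) ≠ 0 := by
  have h1 : Complex.I * (l : ℂ) / (x : ℂ) = ((l / x : ℝ) : ℂ) * Complex.I := by push_cast; ring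
  rw [h1]
  intro H
  have := congrArg Complex.re H
  simp at this

lemma imag_denom_ne'' (x l : ℝ) (hx : x ≠ 0) : ((x : ℂ) + Complex.I * (l : ℂ)) ≠ 0 := by
  rw [show Complex.I * (l : ℂ) = (l : ℂ) * Complex.I by ring]
  intro H
  have := congrArg Complex.re H
  simp [Complex.add_re] at this
  exact hx this

lemma one_add_expNegRho (lam : V → ℝ) (k : ℝ) (hk : k ≠ 0) (j : V) (hd : G.degree j ≠ 0) :
    1 + expNegRho G lam k j
      = (G.degree j : ℂ) * (2 / ((G.degree j : ℂ) + Complex.I * (lam j : ℂ) / (k : ℂ))) := by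
  unfold expNegRho
  have hden : (1 + Complex.I * (lam j : ℂ) / ((k : ℂ) * (G.degree j : ℂ))) ≠ 0 := by
    rw [show ((k : ℂ) * (G.degree j : ℂ)) = ((k * G.degree j : ℝ) : ℂ) by push_cast; ring]
    exact imag_denom_ne' _ _
  have hden2 : ((G.degree j : ℂ) + Complex.I * (lam j : ℂ) / (k : ℂ)) ≠ 0 :=
    imag_denom_ne _ hd _ _
  have hk' : (k : ℂ) ≠ 0 := Complex.ofReal_ne_zero.2 hk
  have hd' : (G.degree j : ℂ) ≠ 0 := Nat.cast_ne_zero.2 hd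
  have hden3 : ((k : ℂ) * (G.degree j : ℂ) + Complex.I * (lam j : ℂ)) ≠ 0 := by
    rw [show ((k : ℂ) * (G.degree j : ℂ)) = ((k * G.degree j : ℝ) : ℂ) by push_cast; ring]
    exact imag_denom_ne'' _ _ (mul_ne_zero hk (by exact_mod_cast hd))
  field_simp
  ring

end Aux4

section Aux5
variable {V : Type*} [Fintype V] [DecidableEq V] {G : SimpleGraph V} [DecidableRel G.Adj]

lemma sum_adj (i : V) (f : ∀ j, G.Adj i j → ℂ) :
    (∑ j : V, if h : G.Adj i j then f j h else 0) = ∑ l : {w : V // G.Adj i w}, f l.1 l.2 := by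
  rw [show (∑ j : V, if h : G.Adj i j then f j h else 0)
        = ∑ j ∈ G.neighborFinset i, (if h : G.Adj i j then f j h else 0) from
    (Finset.sum_subset (Finset.subset_univ _) (by
      intro x _ hx
      rw [dif_neg (by simpa [SimpleGraph.mem_neighborFinset] using hx)])).symm]
  rw [Finset.sum_subtype (G.neighborFinset i)
    (fun x => SimpleGraph.mem_neighborFinset G i x) (fun j => if h : G.Adj i j then f j h else 0)]
  exact Finset.sum_congr rfl fun l _ => dif_pos l.2

lemma isEmpty_nbr (i : V) (hd : G.degree i = 0) : IsEmpty {w : V // G.Adj i w} := by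
  constructor
  intro l
  exact ((G.degree_pos_iff_exists_adj i).2 ⟨l.1, l.2⟩).ne' hd

lemma deg_ne_of_adj {i j : V} (h : G.Adj i j) : G.degree i ≠ 0 :=
  ((G.degree_pos_iff_exists_adj i).2 ⟨j, h⟩).ne'

end Aux5

section Aux6

lemma Dterm_alg (d c E y : ℂ) (hd : d ≠ 0) (hE : 1 - E ≠ 0) :
    d * c * (E / (d * (1 - E))) * y = c * (E / (1 - E)) * y := by
  field_simp

/-- Abstract per-edge algebra shared by both directions. -/
lemma per_edge (P E ci cj yi yj si sj sqi sqj rj A : ℂ)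
    (hsi : si = sqi * yi) (hsj : sj = sqj * yj)
    (hrj : rj = (sqj * sqj) * cj)
    (hsqi : sqi ≠ 0) (hsqj : sqj ≠ 0) (hE : 1 - E ≠ 0)
    (hA : A * (1 - E) = P * cj * sj - E * ci * si) :
    P * rj / ((sqi * sqj) * (1 - E)) * yj - ci * (E / (1 - E)) * yi = A / sqi := by
  subst hsi hsj hrj
  have e1 : P * ((sqj * sqj) * cj) / ((sqi * sqj) * (1 - E)) * yj
      = (P * cj * (sqj * yj)) / (1 - E) / sqi := by
    field_simp
  have e2 : ci * (E / (1 - E)) * yi = (E * ci * (sqi * yi)) / (1 - E) / sqi := by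
    field_simp
  rw [e1, e2, ← sub_div, ← sub_div, ← hA, mul_div_cancel_right₀ A hE]

end Aux6

section Aux7
variable {V : Type*} [Fintype V] [DecidableEq V]

lemma mulVec_expand (Tf : V → V → ℂ) (Df : V → ℂ) (y : V → ℂ) (i : V) :
    ((1 : Matrix V V ℂ) - Matrix.of Tf
        + Matrix.of (fun i j : V => if i = j then Df j else 0)).mulVec y i
      = y i - ∑ j : V, Tf i j * y j + Df i * y i := by
  rw [Matrix.add_mulVec, Matrix.sub_mulVec, Matrix.one_mulVec]
  have hD : (Matrix.of (fun i j : V => if i = j then Df j else 0)).mulVec y i = Df i * y i := by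
    simp [Matrix.mulVec, dotProduct, ite_mul, Finset.sum_ite_eq]
  have hT : (Matrix.of Tf).mulVec y i = ∑ j : V, Tf i j * y j := rfl
  simp only [Pi.add_apply, Pi.sub_apply, hD, hT]

variable {G : SimpleGraph V} [DecidableRel G.Adj]

lemma sum_dite_adj_mul (i : V) (B : ∀ j, G.Adj i j → ℂ) (y : V → ℂ) :
    ∑ j : V, (if h : G.Adj i j then B j h else 0) * y j
      = ∑ l : {w : V // G.Adj i w}, B l.1 l.2 * y l.1 := by
  rw [← sum_adj i (fun j h => B j h * y j)]
  exact Finset.sum_congr rfl fun j _ => by by_cases h : G.Adj i j <;> simp [h]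

end Aux7
/-- secular equation for the quantum graph walk: assuming `e^{2ikL_e} ≠ 1` on every
edge, the quantum graph walk has a nonzero fixed vector iff `det(I_{|V|} − T + 𝒟) = 0`. -/
theorem qgWalk_secular_equation {V : Type*} [Fintype V] [LinearOrder V]
    (G : SimpleGraph V) [DecidableRel G.Adj] (hG : G.Connected)
    (L : V → V → ℝ) (hLs : ∀ i j, L i j = L j i) (hLpos : ∀ i j, G.Adj i j → 0 < L i j)
    (lam : V → ℝ) (hlam : ∀ i, 0 ≤ lam i)
    (Ae : V → V → ℝ) (hAs : ∀ i j, Ae i j = Ae j i)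
    (k : ℝ) (hk : k ≠ 0)
    (hL1 : ∀ i j : V, G.Adj i j →
      Complex.exp (2 * Complex.I * (k : ℂ) * (L i j : ℂ)) ≠ 1) :
    (∃ a : Arc G → ℂ, a ≠ 0 ∧ (qgWalk G L lam Ae k).mulVec a = a) ↔
      Matrix.det
        ((1 : Matrix V V ℂ) -
          Matrix.of (fun i j : V =>
            if h : G.Adj i j then
              Complex.exp (Complex.I * (L i j : ℂ) * ((k : ℂ) + (arcPot Ae i j : ℂ))) *
                  (1 + expNegRho G lam k j) /
                (((Real.sqrt ((G.degree i : ℝ) * (G.degree j : ℝ)) : ℝ) : ℂ) *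
                  (1 - Complex.exp (2 * Complex.I * (k : ℂ) * (L i j : ℂ))))
            else 0) +
          Matrix.of (fun i j : V =>
            if i = j then
              (1 + expNegRho G lam k j) *
                ∑ l : {w : V // G.Adj j w},
                  Complex.exp (2 * Complex.I * (k : ℂ) * (L j l.1 : ℂ)) /
                    ((G.degree j : ℂ) *
                      (1 - Complex.exp (2 * Complex.I * (k : ℂ) * (L j l.1 : ℂ))))
            else 0)) = 0 := by
  classical
  have hk' : (k : ℂ) ≠ 0 := Complex.ofReal_ne_zero.2 hk
  have hsqne : ∀ i : V, G.degree i ≠ 0 → ((Real.sqrt (G.degree i) : ℝ) : ℂ) ≠ 0 := by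
    intro i hi
    rw [Complex.ofReal_ne_zero, Real.sqrt_ne_zero']
    exact_mod_cast Nat.pos_of_ne_zero hi
  have hsqsq : ∀ i : V, ((Real.sqrt (G.degree i) : ℝ) : ℂ) * ((Real.sqrt (G.degree i) : ℝ) : ℂ)
      = (G.degree i : ℂ) := by
    intro i
    rw [← Complex.ofReal_mul, Real.mul_self_sqrt (by positivity)]
    norm_cast
  have hE1 : ∀ {i j : V}, G.Adj i j →
      (1 - Complex.exp (2 * Complex.I * (k : ℂ) * (L i j : ℂ))) ≠ 0 :=
    fun h => sub_ne_zero_of_ne (Ne.symm (hL1 _ _ h))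
  have hEs : ∀ i j : V, Complex.exp (2 * Complex.I * (k : ℂ) * (L j i : ℂ))
      = Complex.exp (2 * Complex.I * (k : ℂ) * (L i j : ℂ)) := by
    intro i j; rw [hLs j i]
  have hPPm : ∀ {i j : V}, G.Adj i j →
      Complex.exp (Complex.I * (L i j : ℂ) * ((k : ℂ) + (arcPot Ae i j : ℂ)))
          * Complex.exp (Complex.I * (L j i : ℂ) * ((k : ℂ) + (arcPot Ae j i : ℂ)))
        = Complex.exp (2 * Complex.I * (k : ℂ) * (L i j : ℂ)) := by
    intro i j h
    rw [← Complex.exp_add]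
    congr 1
    rw [hLs j i, arcPot_anti Ae hAs (G.ne_of_adj h).symm]
    push_cast; ring
  have hrho : ∀ {i j : V}, G.Adj i j → 1 + expNegRho G lam k j
      = (((Real.sqrt (G.degree j) : ℝ) : ℂ) * ((Real.sqrt (G.degree j) : ℝ) : ℂ))
        * (2 / ((G.degree j : ℂ) + Complex.I * (lam j : ℂ) / (k : ℂ))) := by
    intro i j h
    rw [hsqsq j]
    exact one_add_expNegRho G lam k hk j (deg_ne_of_adj h.symm)
  have hsqmul : ∀ i j : V, ((Real.sqrt ((G.degree i : ℝ) * (G.degree j : ℝ)) : ℝ) : ℂ)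
      = ((Real.sqrt (G.degree i) : ℝ) : ℂ) * ((Real.sqrt (G.degree j) : ℝ) : ℂ) := by
    intro i j
    rw [Real.sqrt_mul (by positivity), Complex.ofReal_mul]
  rw [← Matrix.exists_mulVec_eq_zero_iff]
  constructor
  · rintro ⟨a, ha0, hfix⟩
    set s : V → ℂ := fun i => ∑ l : {w : V // G.Adj i w}, a ⟨(i, l.1), l.2⟩ with hs
    set y : V → ℂ := fun i => s i / ((Real.sqrt (G.degree i) : ℝ) : ℂ) with hy
    have hsdef : ∀ i : V, s i = ∑ l : {w : V // G.Adj i w}, a ⟨(i, l.1), l.2⟩ := fun i => rfl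
    have hydef : ∀ i : V, y i = s i / ((Real.sqrt (G.degree i) : ℝ) : ℂ) := fun i => rfl
    have hs0 : ∀ i : V, G.degree i = 0 → s i = 0 := by
      intro i hi
      have : IsEmpty {w : V // G.Adj i w} := isEmpty_nbr i hi
      rw [hsdef i, Finset.univ_eq_empty, Finset.sum_empty]
    have hsy : ∀ i : V, s i = ((Real.sqrt (G.degree i) : ℝ) : ℂ) * y i := by
      intro i
      by_cases hi : G.degree i = 0
      · rw [hs0 i hi, hydef i, hs0 i hi]; simp
      · rw [hydef i, mul_div_cancel₀ _ (hsqne i hi)]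
    have key : ∀ (i j : V) (h : G.Adj i j),
        a ⟨(i, j), h⟩ * (1 - Complex.exp (2 * Complex.I * (k : ℂ) * (L i j : ℂ)))
          = Complex.exp (Complex.I * (L i j : ℂ) * ((k : ℂ) + (arcPot Ae i j : ℂ)))
              * (2 / ((G.degree j : ℂ) + Complex.I * (lam j : ℂ) / (k : ℂ))) * s j
            - Complex.exp (2 * Complex.I * (k : ℂ) * (L i j : ℂ))
              * (2 / ((G.degree i : ℂ) + Complex.I * (lam i : ℂ) / (k : ℂ))) * s i := by
      intro i j h
      have e1 := walk_arc_apply L hLs lam Ae hAs k a h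
      have e2 := walk_arc_apply L hLs lam Ae hAs k a h.symm
      rw [hfix] at e1 e2
      rw [← hsdef j] at e1
      rw [← hsdef i] at e2
      linear_combination e1
        - Complex.exp (Complex.I * (L i j : ℂ) * ((k : ℂ) + (arcPot Ae i j : ℂ))) * e2
        - ((2 / ((G.degree i : ℂ) + Complex.I * (lam i : ℂ) / (k : ℂ))) * s i
            - a ⟨(i, j), h⟩) * hPPm h
    have hyne : y ≠ 0 := by
      intro h0
      apply ha0
      funext x
      obtain ⟨⟨i, j⟩, hx⟩ := x
      have hk2 := key i j hx
      have hsz : ∀ m : V, s m = 0 := by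
        intro m; rw [hsy m, h0]; simp
      rw [hsz i, hsz j] at hk2
      have hz : a ⟨(i, j), hx⟩ * (1 - Complex.exp (2 * Complex.I * (k : ℂ) * (L i j : ℂ))) = 0 := by
        rw [hk2]; ring
      rcases mul_eq_zero.1 hz with h' | h'
      · simpa using h'
      · exact absurd h' (hE1 hx)
    refine ⟨y, hyne, ?_⟩
    funext i
    rw [mulVec_expand, Pi.zero_apply, sum_dite_adj_mul]
    by_cases hdi : G.degree i = 0
    · have hempty : IsEmpty {w : V // G.Adj i w} := isEmpty_nbr i hdi
      have hyi : y i = 0 := by rw [hydef i, hs0 i hdi]; simp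
      rw [Finset.univ_eq_empty, Finset.sum_empty, Finset.sum_empty, hyi]
      ring
    · have hdC : (G.degree i : ℂ) ≠ 0 := Nat.cast_ne_zero.2 hdi
      have hD2 : (1 + expNegRho G lam k i)
            * (∑ l : {w : V // G.Adj i w},
                Complex.exp (2 * Complex.I * (k : ℂ) * (L i l.1 : ℂ))
                  / ((G.degree i : ℂ)
                      * (1 - Complex.exp (2 * Complex.I * (k : ℂ) * (L i l.1 : ℂ))))) * y i
          = ∑ l : {w : V // G.Adj i w},
              (2 / ((G.degree i : ℂ) + Complex.I * (lam i : ℂ) / (k : ℂ)))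
                * (Complex.exp (2 * Complex.I * (k : ℂ) * (L i l.1 : ℂ))
                    / (1 - Complex.exp (2 * Complex.I * (k : ℂ) * (L i l.1 : ℂ)))) * y i := by
        rw [one_add_expNegRho G lam k hk i hdi, Finset.mul_sum, Finset.sum_mul]
        refine Finset.sum_congr rfl fun l _ => ?_
        exact Dterm_alg _ _ _ _ hdC (hE1 l.2)
      rw [hD2]
      have hterm : ∀ l : {w : V // G.Adj i w},
          Complex.exp (Complex.I * (L i l.1 : ℂ) * ((k : ℂ) + (arcPot Ae i l.1 : ℂ)))
              * (1 + expNegRho G lam k l.1)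
              / (((Real.sqrt ((G.degree i : ℝ) * (G.degree l.1 : ℝ)) : ℝ) : ℂ)
                  * (1 - Complex.exp (2 * Complex.I * (k : ℂ) * (L i l.1 : ℂ)))) * y l.1
            - (2 / ((G.degree i : ℂ) + Complex.I * (lam i : ℂ) / (k : ℂ)))
                * (Complex.exp (2 * Complex.I * (k : ℂ) * (L i l.1 : ℂ))
                    / (1 - Complex.exp (2 * Complex.I * (k : ℂ) * (L i l.1 : ℂ)))) * y i
          = a ⟨(i, l.1), l.2⟩ / ((Real.sqrt (G.degree i) : ℝ) : ℂ) := by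
        intro l
        rw [hsqmul i l.1]
        exact per_edge _ _ _ _ _ _ _ _ _ _ _ _ (hsy i) (hsy l.1) (hrho l.2)
          (hsqne i hdi) (hsqne l.1 (deg_ne_of_adj l.2.symm)) (hE1 l.2) (key i l.1 l.2)
      have hAB : (∑ l : {w : V // G.Adj i w},
            Complex.exp (Complex.I * (L i l.1 : ℂ) * ((k : ℂ) + (arcPot Ae i l.1 : ℂ)))
              * (1 + expNegRho G lam k l.1)
              / (((Real.sqrt ((G.degree i : ℝ) * (G.degree l.1 : ℝ)) : ℝ) : ℂ)
                  * (1 - Complex.exp (2 * Complex.I * (k : ℂ) * (L i l.1 : ℂ)))) * y l.1)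
          - (∑ l : {w : V // G.Adj i w},
              (2 / ((G.degree i : ℂ) + Complex.I * (lam i : ℂ) / (k : ℂ)))
                * (Complex.exp (2 * Complex.I * (k : ℂ) * (L i l.1 : ℂ))
                    / (1 - Complex.exp (2 * Complex.I * (k : ℂ) * (L i l.1 : ℂ)))) * y i)
          = y i := by
        rw [← Finset.sum_sub_distrib, Finset.sum_congr rfl fun l _ => hterm l,
          ← Finset.sum_div, ← hsdef i, ← hydef i]
      linear_combination (-1 : ℂ) * hAB
  · rintro ⟨y, hy0, hMy⟩
    set s : V → ℂ := fun i => ((Real.sqrt (G.degree i) : ℝ) : ℂ) * y i with hs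
    set a : Arc G → ℂ := fun x =>
      (Complex.exp (Complex.I * (L x.1.1 x.1.2 : ℂ) * ((k : ℂ) + (arcPot Ae x.1.1 x.1.2 : ℂ)))
            * (2 / ((G.degree x.1.2 : ℂ) + Complex.I * (lam x.1.2 : ℂ) / (k : ℂ))) * s x.1.2
          - Complex.exp (2 * Complex.I * (k : ℂ) * (L x.1.1 x.1.2 : ℂ))
            * (2 / ((G.degree x.1.1 : ℂ) + Complex.I * (lam x.1.1 : ℂ) / (k : ℂ))) * s x.1.1)
        / (1 - Complex.exp (2 * Complex.I * (k : ℂ) * (L x.1.1 x.1.2 : ℂ))) with ha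
    have hsdef : ∀ i : V, s i = ((Real.sqrt (G.degree i) : ℝ) : ℂ) * y i := fun _ => rfl
    have key : ∀ (i j : V) (h : G.Adj i j),
        a ⟨(i, j), h⟩ * (1 - Complex.exp (2 * Complex.I * (k : ℂ) * (L i j : ℂ)))
          = Complex.exp (Complex.I * (L i j : ℂ) * ((k : ℂ) + (arcPot Ae i j : ℂ)))
              * (2 / ((G.degree j : ℂ) + Complex.I * (lam j : ℂ) / (k : ℂ))) * s j
            - Complex.exp (2 * Complex.I * (k : ℂ) * (L i j : ℂ))
              * (2 / ((G.degree i : ℂ) + Complex.I * (lam i : ℂ) / (k : ℂ))) * s i := by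
      intro i j h
      show (_ / (1 - Complex.exp (2 * Complex.I * (k : ℂ) * (L i j : ℂ)))) * _ = _
      rw [div_mul_cancel₀ _ (hE1 h)]
    have hrow : ∀ i : V, y i - (∑ l : {w : V // G.Adj i w},
          Complex.exp (Complex.I * (L i l.1 : ℂ) * ((k : ℂ) + (arcPot Ae i l.1 : ℂ)))
              * (1 + expNegRho G lam k l.1)
              / (((Real.sqrt ((G.degree i : ℝ) * (G.degree l.1 : ℝ)) : ℝ) : ℂ)
                  * (1 - Complex.exp (2 * Complex.I * (k : ℂ) * (L i l.1 : ℂ)))) * y l.1)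
        + ((1 + expNegRho G lam k i)
            * ∑ l : {w : V // G.Adj i w},
                Complex.exp (2 * Complex.I * (k : ℂ) * (L i l.1 : ℂ))
                  / ((G.degree i : ℂ)
                      * (1 - Complex.exp (2 * Complex.I * (k : ℂ) * (L i l.1 : ℂ))))) * y i
        = 0 := by
      intro i
      have h3 := congrFun hMy i
      rwa [mulVec_expand, Pi.zero_apply, sum_dite_adj_mul] at h3
    have hvert : ∀ i : V, (∑ l : {w : V // G.Adj i w}, a ⟨(i, l.1), l.2⟩) = s i := by
      intro i
      by_cases hdi : G.degree i = 0
      · have : IsEmpty {w : V // G.Adj i w} := isEmpty_nbr i hdi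
        rw [Finset.univ_eq_empty, Finset.sum_empty, hsdef i, hdi]
        simp
      · have hdC : (G.degree i : ℂ) ≠ 0 := Nat.cast_ne_zero.2 hdi
        have hD2 : (1 + expNegRho G lam k i)
              * (∑ l : {w : V // G.Adj i w},
                  Complex.exp (2 * Complex.I * (k : ℂ) * (L i l.1 : ℂ))
                    / ((G.degree i : ℂ)
                        * (1 - Complex.exp (2 * Complex.I * (k : ℂ) * (L i l.1 : ℂ))))) * y i
            = ∑ l : {w : V // G.Adj i w},
                (2 / ((G.degree i : ℂ) + Complex.I * (lam i : ℂ) / (k : ℂ)))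
                  * (Complex.exp (2 * Complex.I * (k : ℂ) * (L i l.1 : ℂ))
                      / (1 - Complex.exp (2 * Complex.I * (k : ℂ) * (L i l.1 : ℂ)))) * y i := by
          rw [one_add_expNegRho G lam k hk i hdi, Finset.mul_sum, Finset.sum_mul]
          refine Finset.sum_congr rfl fun l _ => ?_
          exact Dterm_alg _ _ _ _ hdC (hE1 l.2)
        have hterm : ∀ l : {w : V // G.Adj i w},
            Complex.exp (Complex.I * (L i l.1 : ℂ) * ((k : ℂ) + (arcPot Ae i l.1 : ℂ)))
                * (1 + expNegRho G lam k l.1)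
                / (((Real.sqrt ((G.degree i : ℝ) * (G.degree l.1 : ℝ)) : ℝ) : ℂ)
                    * (1 - Complex.exp (2 * Complex.I * (k : ℂ) * (L i l.1 : ℂ)))) * y l.1
              - (2 / ((G.degree i : ℂ) + Complex.I * (lam i : ℂ) / (k : ℂ)))
                  * (Complex.exp (2 * Complex.I * (k : ℂ) * (L i l.1 : ℂ))
                      / (1 - Complex.exp (2 * Complex.I * (k : ℂ) * (L i l.1 : ℂ)))) * y i
            = a ⟨(i, l.1), l.2⟩ / ((Real.sqrt (G.degree i) : ℝ) : ℂ) := by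
          intro l
          rw [hsqmul i l.1]
          exact per_edge _ _ _ _ _ _ _ _ _ _ _ _ (hsdef i) (hsdef l.1) (hrho l.2)
            (hsqne i hdi) (hsqne l.1 (deg_ne_of_adj l.2.symm)) (hE1 l.2) (key i l.1 l.2)
        have hAB : (∑ l : {w : V // G.Adj i w},
              Complex.exp (Complex.I * (L i l.1 : ℂ) * ((k : ℂ) + (arcPot Ae i l.1 : ℂ)))
                * (1 + expNegRho G lam k l.1)
                / (((Real.sqrt ((G.degree i : ℝ) * (G.degree l.1 : ℝ)) : ℝ) : ℂ)
                    * (1 - Complex.exp (2 * Complex.I * (k : ℂ) * (L i l.1 : ℂ)))) * y l.1)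
            - (∑ l : {w : V // G.Adj i w},
                (2 / ((G.degree i : ℂ) + Complex.I * (lam i : ℂ) / (k : ℂ)))
                  * (Complex.exp (2 * Complex.I * (k : ℂ) * (L i l.1 : ℂ))
                      / (1 - Complex.exp (2 * Complex.I * (k : ℂ) * (L i l.1 : ℂ)))) * y i)
            = (∑ l : {w : V // G.Adj i w}, a ⟨(i, l.1), l.2⟩)
                / ((Real.sqrt (G.degree i) : ℝ) : ℂ) := by
          rw [← Finset.sum_sub_distrib, Finset.sum_congr rfl fun l _ => hterm l,
            ← Finset.sum_div]
        have h3 := hrow i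
        rw [hD2] at h3
        have h4 : (∑ l : {w : V // G.Adj i w}, a ⟨(i, l.1), l.2⟩)
            / ((Real.sqrt (G.degree i) : ℝ) : ℂ) = y i := by
          linear_combination - hAB - h3
        rw [hsdef i, ← h4, mul_div_cancel₀ _ (hsqne i hdi)]
    have hane : a ≠ 0 := by
      intro h0
      apply hy0
      funext i
      rw [Pi.zero_apply]
      by_cases hdi : G.degree i = 0
      · have h3 := hrow i
        have : IsEmpty {w : V // G.Adj i w} := isEmpty_nbr i hdi
        rw [Finset.univ_eq_empty, Finset.sum_empty, Finset.sum_empty] at h3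
        simpa using h3
      · have h5 := hvert i
        rw [h0] at h5
        simp only [Pi.zero_apply, Finset.sum_const_zero] at h5
        rw [hsdef i] at h5
        rcases mul_eq_zero.1 h5.symm with h' | h'
        · exact absurd h' (hsqne i hdi)
        · exact h'
    refine ⟨a, hane, ?_⟩
    funext x
    obtain ⟨⟨i, j⟩, hx⟩ := x
    rw [walk_arc_apply L hLs lam Ae hAs k a hx, hvert j]
    have k1 := key i j hx
    have k2 := key j i hx.symm
    rw [hEs i j] at k2
    apply mul_right_cancel₀ (hE1 hx)
    linear_combination - k1
      - Complex.exp (Complex.I * (L i j : ℂ) * ((k : ℂ) + (arcPot Ae i j : ℂ))) * k2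
      - ((2 / ((G.degree i : ℂ) + Complex.I * (lam i : ℂ) / (k : ℂ))) * s i) * hPPm hx
end
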